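/- arXiv:2405.20467 — 3 statements merged into one kernel-verified Lean document; each statement's English description precedes it below -/
import Mathlib

section
/- Let P be an irreducible, positive recurrent transition kernel on a countable state space S with unique stationary distribution d. Let f : S → [0,∞), c : S → [0,∞), and ε > 0, g ≥ 0 be such that for all q ∈ S, E[f²(q₁) − f²(q₀) | q₀ = q] ≤ −ε·c(q) + g, and suppose Σ_q d(q)·f²(q) < ∞. Then the stationary average cost satisfies Σ_q d(q)·c(q) ≤ g/ε. -/
/-- If `P` is a Markov kernel on a countable state space with stationary
distribution `d`, `f, c ≥ 0`, drift `Σ_{q'} P(q'|q) f²(q') - f²(q) ≤ -ε c(q) + g`,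
and `Σ_q d(q) f²(q) < ∞`, then `Σ_q d(q) c(q) ≤ g/ε`. -/
theorem stationary_average_cost_bound
    {S : Type*} [Countable S]
    (P : S → S → ℝ) (d : S → ℝ) (f c : S → ℝ) (ε g : ℝ)
    (hP0 : ∀ q q', 0 ≤ P q q') (hP1 : ∀ q, HasSum (P q) 1)
    (hd0 : ∀ q, 0 ≤ d q) (hd1 : HasSum d 1)
    (hstat : ∀ q', ∑' q, d q * P q q' = d q')
    (hf : ∀ q, 0 ≤ f q) (hc : ∀ q, 0 ≤ c q)
    (hε : 0 < ε) (hg : 0 ≤ g)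
    (hrow : ∀ q, Summable (fun q' => P q q' * f q' ^ 2))
    (hdrift : ∀ q, (∑' q', P q q' * f q' ^ 2) - f q ^ 2 ≤ -ε * c q + g)
    (hint : Summable (fun q => d q * f q ^ 2)) :
    ∑' q, d q * c q ≤ g / ε := by
  have hPF0 : ∀ q, 0 ≤ ∑' q', P q q' * f q' ^ 2 := fun q =>
    tsum_nonneg fun q' => mul_nonneg (hP0 q q') (sq_nonneg _)
  have hdg : Summable (fun q => d q * g) := hd1.summable.mul_right g
  have hdF : Summable (fun q => d q * f q ^ 2) := hint
  have hεc : ∀ q, ε * c q ≤ g + f q ^ 2 := fun q => by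
    have h1 := hdrift q
    have h2 := hPF0 q
    linarith
  have hdc : Summable (fun q => d q * c q) := by
    apply Summable.of_nonneg_of_le (fun q => mul_nonneg (hd0 q) (hc q))
      (fun q => ?_) ((hdg.add hdF).div_const ε)
    rw [le_div_iff₀ hε]
    nlinarith [mul_le_mul_of_nonneg_left (hεc q) (hd0 q)]
  have hdPF : Summable (fun q => d q * ∑' q', P q q' * f q' ^ 2) := by
    apply Summable.of_nonneg_of_le
      (fun q => mul_nonneg (hd0 q) (hPF0 q)) (fun q => ?_) (hdF.add hdg)
    nlinarith [mul_le_mul_of_nonneg_left (hdrift q) (hd0 q), hε.le,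
      mul_nonneg (hd0 q) (hc q)]
  have hSum : Summable (fun p : S × S => d p.1 * (P p.1 p.2 * f p.2 ^ 2)) := by
    apply (summable_prod_of_nonneg
      (fun p => mul_nonneg (hd0 p.1) (mul_nonneg (hP0 p.1 p.2) (sq_nonneg _)))).mpr
    exact ⟨fun q => (hrow q).mul_left (d q), by simpa [tsum_mul_left] using hdPF⟩
  have key : ∑' q, d q * ∑' q', P q q' * f q' ^ 2 = ∑' q, d q * f q ^ 2 := by
    calc ∑' q, d q * ∑' q', P q q' * f q' ^ 2
        = ∑' q, ∑' q', d q * (P q q' * f q' ^ 2) := by simp [tsum_mul_left]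
      _ = ∑' q', ∑' q, d q * (P q q' * f q' ^ 2) :=
          (Summable.tsum_comm (f := fun q q' => d q * (P q q' * f q' ^ 2)) hSum).symm
      _ = ∑' q', (∑' q, d q * P q q') * f q' ^ 2 := by
          congr 1; funext q'
          rw [← tsum_mul_right]
          congr 1; funext q; ring
      _ = ∑' q', d q' * f q' ^ 2 := by simp [hstat]
  have hsub : ∀ q, d q * (∑' q', P q q' * f q' ^ 2) + ε * (d q * c q)
      ≤ d q * f q ^ 2 + d q * g := fun q => by
    nlinarith [mul_le_mul_of_nonneg_left (hdrift q) (hd0 q)]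
  have hsum := Summable.tsum_le_tsum hsub (hdPF.add (hdc.mul_left ε)) (hdF.add hdg)
  rw [Summable.tsum_add hdPF (hdc.mul_left ε), Summable.tsum_add hdF hdg, tsum_mul_left, key,
    tsum_mul_right, hd1.tsum_eq] at hsum
  rw [le_div_iff₀ hε]
  linarith
end

section
/- Let V_π be a solution of Poisson's equation J_π + V_π(q) = c_π(q) + Σ_{q'} P_π(q'|q)·V_π(q') on a countable state space, with V_π(q) = E[Σ_{i=0}^{τ−1}(c_π(q_i) − J_π) | q₀ = q], where τ is the hitting time of a fixed state q* and costs c_π are nonnegative. Suppose the average cost satisfies J_π ≤ g/ε and the expected number of visits to a finite set B before hitting q* ∈ B is at most T_B/p_B² from any start state, and c_π(q) ≥ J_π for all q ∉ B. Then V_π(q) ≥ −(g/ε)·(T_B/p_B²) for every state q. -/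
open MeasureTheory Classical

/-- Lower bound on the relative value function: if
`V q = E[Σ_{i<τ}(c(q_i) - J) | q₀ = q]` with `τ` the hitting time of `q* ∈ B`,
costs nonnegative, `0 ≤ J ≤ g/ε`, `c(q) ≥ J` outside `B`, and the expected
number of visits to `B` before `τ` is at most `T_B/p_B²` from any start state,
then `V q ≥ -(g/ε)·(T_B/p_B²)`. -/
theorem value_function_lower_bound
    {S : Type*} [MeasurableSpace S] [Countable S]
    {Ω : Type*} [MeasurableSpace Ω]
    (ℙ : S → Measure Ω) (hprob : ∀ q, IsProbabilityMeasure (ℙ q))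
    (X : ℕ → Ω → S) (hX : ∀ k, Measurable (X k))
    (c : S → ℝ) (hc : ∀ s, 0 ≤ c s)
    (J g ε TB pB : ℝ) (hε : 0 < ε) (hpB : 0 < pB)
    (hJ0 : 0 ≤ J) (hJ : J ≤ g / ε)
    (B : Set S) (hB : B.Finite) (qstar : S) (hqstar : qstar ∈ B)
    (hcout : ∀ s ∉ B, J ≤ c s)
    (hhit : ∀ q, ∀ᵐ ω ∂(ℙ q), ∃ k, X k ω = qstar)
    (V : S → ℝ)
    (hVint : ∀ q, Integrable
      (fun ω => ∑ i ∈ Finset.range (sInf {k | X k ω = qstar}), (c (X i ω) - J)) (ℙ q))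
    (hV : ∀ q, V q =
      ∫ ω, ∑ i ∈ Finset.range (sInf {k | X k ω = qstar}), (c (X i ω) - J) ∂(ℙ q))
    (hvisitint : ∀ q, Integrable
      (fun ω => ∑ k ∈ Finset.range (sInf {k | X k ω = qstar}),
        (if X k ω ∈ B then (1:ℝ) else 0)) (ℙ q))
    (hvisits : ∀ q,
      (∫ ω, ∑ k ∈ Finset.range (sInf {k | X k ω = qstar}),
        (if X k ω ∈ B then (1:ℝ) else 0) ∂(ℙ q)) ≤ TB / pB ^ 2) :
    ∀ q, -(g / ε) * (TB / pB ^ 2) ≤ V q := by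
  intro q
  rw [hV q]
  have hge : 0 ≤ g / ε := le_trans hJ0 hJ
  have key : ∀ ω, (-(g / ε)) * ∑ k ∈ Finset.range (sInf {k | X k ω = qstar}),
      (if X k ω ∈ B then (1:ℝ) else 0) ≤
      ∑ i ∈ Finset.range (sInf {k | X k ω = qstar}), (c (X i ω) - J) := by
    intro ω
    rw [Finset.mul_sum]
    refine Finset.sum_le_sum fun i _ => ?_
    by_cases h : X i ω ∈ B
    · simp only [h, if_true, mul_one]
      have := hc (X i ω); linarith
    · simp only [h, if_false, mul_zero]
      have := hcout _ h; linarith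
  calc -(g / ε) * (TB / pB ^ 2)
      ≤ -(g / ε) * ∫ ω, ∑ k ∈ Finset.range (sInf {k | X k ω = qstar}),
          (if X k ω ∈ B then (1:ℝ) else 0) ∂(ℙ q) :=
        mul_le_mul_of_nonpos_left (hvisits q) (neg_nonpos.2 hge)
    _ = ∫ ω, (-(g / ε)) * ∑ k ∈ Finset.range (sInf {k | X k ω = qstar}),
          (if X k ω ∈ B then (1:ℝ) else 0) ∂(ℙ q) := (integral_const_mul _ _).symm
    _ ≤ _ := integral_mono ((hvisitint q).const_mul _) (hVint q) key
end

section
/- Under the assumptions: (i) V_π(q) ≤ (2/ε)·f²(q) + (K + C_B)·(1 + T_B/p_B²) and V_π(q) ≥ −(g/ε)·(T_B/p_B²) for all states q; (ii) single-step transitions satisfy |f(q') − f(q)| ≤ D whenever P(q'|q,a) > 0; (iii) Q_π(q,a) = c(q,a) + Σ_{q'} P(q'|q,a)·V_π(q') − J_π with 0 ≤ c(q,a) ≤ c̄(q); then for all actions a, a', |Q_π(q,a) − Q_π(q,a')| ≤ (2/ε)·f²(q) + (4D/ε)·f(q) + c̄(q) + g₁, where g₁ = 2D²/ε + (K + C_B)(1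 + T_B/p_B²) + (g/ε)(T_B/p_B²). -/
/-- Policy-independent bound on the spread of the state-action value function:
given the two-sided bounds on `V`, bounded one-step change of `f`, and the
Poisson relation `Q(q,a) = c(q,a) + Σ_{q'} P(q'|q,a) V(q') - J`, we get
`|Q(q,a) - Q(q,a')| ≤ (2/ε) f²(q) + (4D/ε) f(q) + c̄(q) + g₁`. -/
theorem Q_function_spread_bound
    {S A : Type*} [Countable S]
    (P : S → A → S → ℝ) (V : S → ℝ) (Q : S → A → ℝ)
    (c : S → A → ℝ) (cbar : S → ℝ) (f : S → ℝ) (J : ℝ)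
    (ε g D K CB TB pB : ℝ)
    (hε : 0 < ε) (hg : 0 ≤ g) (hD : 0 ≤ D) (hK : 0 ≤ K) (hCB : 0 ≤ CB)
    (hTB : 0 ≤ TB) (hpB : 0 < pB)
    (hf : ∀ q, 0 ≤ f q)
    (hP0 : ∀ q a q', 0 ≤ P q a q') (hP1 : ∀ q a, HasSum (P q a) 1)
    (hVsum : ∀ q a, Summable (fun q' => P q a q' * V q'))
    (hVub : ∀ q, V q ≤ (2/ε) * f q ^ 2 + (K + CB) * (1 + TB / pB ^ 2))
    (hVlb : ∀ q, -(g/ε) * (TB / pB ^ 2) ≤ V q)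
    (hstep : ∀ q a q', 0 < P q a q' → |f q' - f q| ≤ D)
    (hc : ∀ q a, 0 ≤ c q a) (hcbar : ∀ q a, c q a ≤ cbar q)
    (hQ : ∀ q a, Q q a = c q a + (∑' q', P q a q' * V q') - J) :
    ∀ q (a a' : A),
      |Q q a - Q q a'| ≤ (2/ε) * f q ^ 2 + (4*D/ε) * f q + cbar q
        + (2*D^2/ε + (K + CB) * (1 + TB / pB ^ 2) + (g/ε) * (TB / pB ^ 2)) := by
  intro q a a'
  set Uc : ℝ := (K + CB) * (1 + TB / pB ^ 2) with hUc
  set L : ℝ := -(g/ε) * (TB / pB ^ 2) with hL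
  have hεnn : (0:ℝ) ≤ 2/ε := by positivity
  have key : ∀ b : A, L ≤ (∑' q', P q b q' * V q') ∧
      (∑' q', P q b q' * V q') ≤ (2/ε) * (f q + D)^2 + Uc := by
    intro b
    have hfd : 0 ≤ f q + D := by linarith [hf q]
    have hub : ∀ q', P q b q' * V q' ≤ P q b q' * ((2/ε) * (f q + D)^2 + Uc) := by
      intro q'
      rcases eq_or_lt_of_le (hP0 q b q') with h0 | hpos
      · simp [← h0]
      · refine mul_le_mul_of_nonneg_left ?_ (hP0 q b q')
        have h1 : f q' ≤ f q + D := by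
          have := (abs_le.mp (hstep q b q' hpos)).2
          linarith
        have h2 : f q' ^ 2 ≤ (f q + D) ^ 2 := by
          apply pow_le_pow_left₀ (hf q') h1
        have := hVub q'
        nlinarith
    have hlb : ∀ q', P q b q' * L ≤ P q b q' * V q' :=
      fun q' => mul_le_mul_of_nonneg_left (hVlb q') (hP0 q b q')
    have hS1 : Summable (fun q' => P q b q' * L) := (hP1 q b).summable.mul_right _
    have hS2 : Summable (fun q' => P q b q' * ((2/ε) * (f q + D)^2 + Uc)) :=
      (hP1 q b).summable.mul_right _
    constructor
    · have := Summable.tsum_le_tsum hlb hS1 (hVsum q b)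
      calc L = 1 * L := (one_mul L).symm
        _ = ∑' q', P q b q' * L := ((hP1 q b).mul_right L).tsum_eq.symm
        _ ≤ _ := this
    · have := Summable.tsum_le_tsum hub (hVsum q b) hS2
      calc (∑' q', P q b q' * V q') ≤ ∑' q', P q b q' * ((2/ε) * (f q + D)^2 + Uc) := this
        _ = 1 * ((2/ε) * (f q + D)^2 + Uc) := ((hP1 q b).mul_right _).tsum_eq
        _ = _ := one_mul _
  obtain ⟨hla, hua⟩ := key a
  obtain ⟨hla', hua'⟩ := key a'
  have hexp : (2/ε) * (f q + D)^2 = (2/ε) * f q ^ 2 + (4*D/ε) * f q + 2*D^2/ε := by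
    ring
  rw [abs_sub_le_iff]
  constructor <;>
  · rw [hQ q a, hQ q a']
    have h1 := hcbar q a
    have h2 := hcbar q a'
    have h3 := hc q a
    have h4 := hc q a'
    rw [hL] at *
    nlinarith
end
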